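/- Under the TWHM model with parameter θ = (β_{1,0},…,β_{p,0},β_{1,1},…,β_{p,1}), define the degree of node i at time t as d_i^t = Σ_{k≠i} X^t_{i,k} (with X^t_{k,i} = X^t_{i,k} for k < i). Then for every i = 1,…,p and all times t, s ∈ {0,1,…,n}: E(d_i^t) = Σ_{k≠i} e^{β_{i,0}+β_{k,0}}/(1 + e^{β_{i,0}+β_{k,0}}); Var(d_i^t) = Σ_{k≠i} e^{β_{i,0}+β_{k,0}}/(1 + e^{β_{i,0}+β_{k,0}})²; and Corr(d_i^t, d_i^s) = C_{i,ρ} · Σ_{k≠i} ( e^{β_{i,1}+β_{k,1}}/(1 + e^{β_{i,0}+β_{k,0}} + e^{β_{i,1}+β_{k,1}}) )^{|t−s|} · e^{β_{i,0}+β_{k,0}}/(1 + e^{β_{i,0}+β_{k,0}})², where C_{i,ρ} = ( Σ_{k≠i} e^{β_{i,0}+β_{k,0}}/(1 + e^{β_{i,0}+β_{k,0}})² )^{−1} and Corr denotes the Pearson correlation Cov(d_i^t, d_i^s)/√(Var(d_i^t)·Var(d_i^s)). -/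

import Mathlib

open MeasureTheory ProbabilityTheory Real Finset

/-- The Two-Way Heterogeneity Model (TWHM): `X t i j` (for `i < j`) are `{0,1}`-valued
random variables; the processes over distinct pairs are independent; the initial
distribution and the Markov transition probabilities are as prescribed by the
parameter `β` (where `β i 0 = β_{i,0}` and `β i 1 = β_{i,1}`). -/
structure TWHM (n p : ℕ) (Ω : Type) [MeasurableSpace Ω] (μ : Measure Ω)
    (β : Fin p → Fin 2 → ℝ) (X : ℕ → Fin p → Fin p → Ω → ℝ) : Prop where
  isProb : IsProbabilityMeasure μ
  meas : ∀ t (i j : Fin p), Measurable (X t i j)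
  binary : ∀ t (i j : Fin p), i < j → ∀ ω, X t i j ω = 0 ∨ X t i j ω = 1
  indep : iIndepFun (m := fun _ : {q : Fin p × Fin p // q.1 < q.2} =>
      (inferInstance : MeasurableSpace (Fin (n + 1) → ℝ)))
      (fun q ω => fun t : Fin (n + 1) => X t q.1.1 q.1.2 ω) μ
  init : ∀ (i j : Fin p), i < j →
    (μ {ω | X 0 i j ω = 1}).toReal =
      exp (β i 0 + β j 0) / (1 + exp (β i 0 + β j 0))
  markov_zero : ∀ (i j : Fin p), i < j → ∀ t : ℕ, 1 ≤ t → t ≤ n → ∀ x : ℕ → ℝ,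
    (∀ s, s < t → x s = 0 ∨ x s = 1) → x (t - 1) = 0 →
    0 < μ {ω | ∀ s, s < t → X s i j ω = x s} →
    (μ ({ω | X t i j ω = 1} ∩ {ω | ∀ s, s < t → X s i j ω = x s})).toReal =
      (exp (β i 0 + β j 0) / (1 + exp (β i 0 + β j 0) + exp (β i 1 + β j 1))) *
        (μ {ω | ∀ s, s < t → X s i j ω = x s}).toReal
  markov_one : ∀ (i j : Fin p), i < j → ∀ t : ℕ, 1 ≤ t → t ≤ n → ∀ x : ℕ → ℝ,
    (∀ s, s < t → x s = 0 ∨ x s = 1) → x (t - 1) = 1 →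
    0 < μ {ω | ∀ s, s < t → X s i j ω = x s} →
    (μ ({ω | X t i j ω = 1} ∩ {ω | ∀ s, s < t → X s i j ω = x s})).toReal =
      ((exp (β i 0 + β j 0) + exp (β i 1 + β j 1)) /
          (1 + exp (β i 0 + β j 0) + exp (β i 1 + β j 1))) *
        (μ {ω | ∀ s, s < t → X s i j ω = x s}).toReal

/-- The normalized negative log-likelihood `l(θ)` of the TWHM. -/
noncomputable def twhmLoss (n p : ℕ) {Ω : Type} (X : ℕ → Fin p → Fin p → Ω → ℝ)
    (ω : Ω) (β : Fin p → Fin 2 → ℝ) : ℝ :=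
  (1 / (p : ℝ)) * ∑ i : Fin p, ∑ j : Fin p,
      (if i < j then log (1 + exp (β i 0 + β j 0) + exp (β i 1 + β j 1)) else 0)
  - (1 / ((n : ℝ) * p)) * ∑ i : Fin p, ∑ j : Fin p,
      (if i < j then
        (β i 0 + β j 0) * (∑ t ∈ Finset.Icc 1 n, X t i j ω)
        + log (1 + exp (β i 1 + β j 1)) *
            (∑ t ∈ Finset.Icc 1 n, (1 - X t i j ω) * (1 - X (t - 1) i j ω))
        + log (1 + exp (β i 1 + β j 1 - β i 0 - β j 0)) *
            (∑ t ∈ Finset.Icc 1 n, X t i j ω * X (t - 1) i j ω)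
      else 0)


/-- The symmetric extension of `X`: for `i > j`, `X^t_{i,j} = X^t_{j,i}`. -/
noncomputable def twhmXsym {p : ℕ} {Ω : Type} (X : ℕ → Fin p → Fin p → Ω → ℝ)
    (t : ℕ) (i j : Fin p) (ω : Ω) : ℝ :=
  if i < j then X t i j ω else X t j i ω

/-- The degree of node `i` at time `t`. -/
noncomputable def twhmDeg {p : ℕ} {Ω : Type} (X : ℕ → Fin p → Fin p → Ω → ℝ)
    (i : Fin p) (t : ℕ) (ω : Ω) : ℝ :=
  ∑ k ∈ Finset.univ.erase i, twhmXsym X t i k ω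

/-- Covariance `Cov(f,g) = E(fg) − E(f)E(g)`. -/
noncomputable def covQ {Ω : Type} [MeasurableSpace Ω] (μ : Measure Ω) (f g : Ω → ℝ) : ℝ :=
  (∫ ω, f ω * g ω ∂μ) - (∫ ω, f ω ∂μ) * ∫ ω, g ω ∂μ

set_option linter.unusedSectionVars false

namespace TWHMAux

variable {n p : ℕ} {Ω : Type} [MeasurableSpace Ω] {μ : Measure Ω}
  {βs : Fin p → Fin 2 → ℝ} {X : ℕ → Fin p → Fin p → Ω → ℝ}

noncomputable def bval (b : Bool) : ℝ := if b then 1 else 0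

lemma bval_inj : Function.Injective bval := by
  intro a b h
  cases a <;> cases b <;> simp [bval] at h ⊢

/-- Path event: the trajectory up to (excluding) time `t` equals `v`. -/
def pe (X : ℕ → Fin p → Fin p → Ω → ℝ) (i j : Fin p) (t : ℕ) (v : Fin t → Bool) : Set Ω :=
  {ω | ∀ (s : ℕ) (h : s < t), X s i j ω = bval (v ⟨s, h⟩)}

lemma meas_eq (h : Measurable (X t i j)) (c : ℝ) :
    MeasurableSet {ω | X t i j ω = c} :=
  h (measurableSet_singleton c)

lemma pe_meas (hX : ∀ u, Measurable (X u i j)) {t : ℕ} (v : Fin t → Bool) :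
    MeasurableSet (pe X i j t v) := by
  have : pe X i j t v = ⋂ s : Fin t, {ω | X s i j ω = bval (v s)} := by
    ext ω
    simp only [pe, Set.mem_iInter, Set.mem_setOf_eq]
    exact ⟨fun h s => h s s.2, fun h s hs => h ⟨s, hs⟩⟩
  rw [this]
  exact MeasurableSet.iInter fun s => meas_eq (hX s) _

lemma pe_disj {t : ℕ} {v w : Fin t → Bool} (hvw : v ≠ w) :
    Disjoint (pe X i j t v) (pe X i j t w) := by
  rw [Set.disjoint_left]
  intro ω hv hw
  obtain ⟨s, hs⟩ := Function.ne_iff.mp hvw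
  have h1 := hv s.1 s.2
  have h2 := hw s.1 s.2
  apply hs
  apply bval_inj
  rw [← h1, ← h2]

lemma pe_cover (hbin : ∀ u ω, X u i j ω = 0 ∨ X u i j ω = 1) (t : ℕ) (ω : Ω) :
    ∃ v : Fin t → Bool, ω ∈ pe X i j t v := by
  classical
  refine ⟨fun s => if X s.1 i j ω = 1 then true else false, fun s hs => ?_⟩
  rcases hbin s ω with h | h <;> simp [h, bval]

lemma partition [IsProbabilityMeasure μ]
    (hbin : ∀ u ω, X u i j ω = 0 ∨ X u i j ω = 1)
    (hX : ∀ u, Measurable (X u i j))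
    (B : Set Ω) (hB : MeasurableSet B) (t : ℕ) :
    (μ B).toReal = ∑ v : Fin t → Bool, (μ (B ∩ pe X i j t v)).toReal := by
  rw [← ENNReal.toReal_sum (fun v _ => measure_ne_top μ _)]
  congr 1
  rw [← measure_biUnion_finset (f := fun v => B ∩ pe X i j t v)
      (fun v _ w _ hvw => (pe_disj hvw).mono Set.inter_subset_right Set.inter_subset_right)
      (fun v _ => hB.inter (pe_meas hX v))]
  congr 1
  ext ω
  simp only [Set.mem_iUnion, Finset.mem_univ, Set.mem_inter_iff, exists_true_left]
  constructor
  · intro hωB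
    obtain ⟨v, hv⟩ := pe_cover hbin t ω
    exact ⟨v, hωB, hv⟩
  · rintro ⟨v, hB', _⟩
    exact hB'

noncomputable def pA (βs : Fin p → Fin 2 → ℝ) (i j : Fin p) : ℝ :=
  exp (βs i 0 + βs j 0) / (1 + exp (βs i 0 + βs j 0) + exp (βs i 1 + βs j 1))

noncomputable def pB (βs : Fin p → Fin 2 → ℝ) (i j : Fin p) : ℝ :=
  (exp (βs i 0 + βs j 0) + exp (βs i 1 + βs j 1)) /
    (1 + exp (βs i 0 + βs j 0) + exp (βs i 1 + βs j 1))

noncomputable def pio (βs : Fin p → Fin 2 → ℝ) (i j : Fin p) : ℝ :=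
  exp (βs i 0 + βs j 0) / (1 + exp (βs i 0 + βs j 0))

noncomputable def lam (βs : Fin p → Fin 2 → ℝ) (i j : Fin p) : ℝ :=
  exp (βs i 1 + βs j 1) / (1 + exp (βs i 0 + βs j 0) + exp (βs i 1 + βs j 1))

lemma step_path (hm : TWHM n p Ω μ βs X) {i j : Fin p} (hij : i < j)
    {t : ℕ} (ht1 : 1 ≤ t) (htn : t ≤ n) (htlt : t - 1 < t) (v : Fin t → Bool) :
    (μ ({ω | X t i j ω = 1} ∩ pe X i j t v)).toReal =
      (if v ⟨t - 1, htlt⟩ then pB βs i j else pA βs i j) * (μ (pe X i j t v)).toReal := by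
  classical
  set x : ℕ → ℝ := fun s => if h : s < t then bval (v ⟨s, h⟩) else 0 with hxdef
  have hxv : ∀ (s : ℕ) (h : s < t), x s = bval (v ⟨s, h⟩) := fun s h => dif_pos h
  have hpe : {ω | ∀ s, s < t → X s i j ω = x s} = pe X i j t v := by
    ext ω
    constructor
    · intro h s hs; exact (h s hs).trans (hxv s hs)
    · intro h s hs; exact (h s hs).trans (hxv s hs).symm
  have hbx : ∀ s, s < t → x s = 0 ∨ x s = 1 := by
    intro s hs; rw [hxv s hs]; cases v ⟨s, hs⟩ <;> simp [bval]
  rcases eq_or_lt_of_le (zero_le (a := μ {ω | ∀ s, s < t → X s i j ω = x s})) with hz | hpos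
  · have h0 : μ (pe X i j t v) = 0 := by rw [← hpe]; exact hz.symm
    have h1 : μ ({ω | X t i j ω = 1} ∩ pe X i j t v) = 0 :=
      measure_mono_null Set.inter_subset_right h0
    simp [h0, h1]
  · cases hb : v ⟨t - 1, htlt⟩ with
    | false =>
        have hlast : x (t - 1) = 0 := by rw [hxv _ htlt, hb]; simp [bval]
        have e := hm.markov_zero i j hij t ht1 htn x hbx hlast hpos
        rw [hpe] at e
        rw [e, if_neg (by simp)]
        rfl
    | true =>
        have hlast : x (t - 1) = 1 := by rw [hxv _ htlt, hb]; simp [bval]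
        have e := hm.markov_one i j hij t ht1 htn x hbx hlast hpos
        rw [hpe] at e
        rw [e, if_pos rfl]
        rfl

lemma step_general (hm : TWHM n p Ω μ βs X) {i j : Fin p} (hij : i < j)
    {t : ℕ} (ht1 : 1 ≤ t) (htn : t ≤ n)
    (B : Set Ω) (hBm : MeasurableSet B)
    (hB : ∀ v : Fin t → Bool, pe X i j t v ⊆ B ∨ B ∩ pe X i j t v = ∅) :
    (μ ({ω | X t i j ω = 1} ∩ B)).toReal =
      pA βs i j * (μ (B ∩ {ω | X (t - 1) i j ω = 0})).toReal +
      pB βs i j * (μ (B ∩ {ω | X (t - 1) i j ω = 1})).toReal := by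
  haveI := hm.isProb
  have hbin : ∀ u ω, X u i j ω = 0 ∨ X u i j ω = 1 := fun u ω => hm.binary u i j hij ω
  have hXm : ∀ u, Measurable (X u i j) := fun u => hm.meas u i j
  have htlt : t - 1 < t := by omega
  have e1 := partition (μ := μ) hbin hXm ({ω | X t i j ω = 1} ∩ B) ((meas_eq (hXm t) 1).inter hBm) t
  have e2 := partition (μ := μ) hbin hXm (B ∩ {ω | X (t - 1) i j ω = 0})
    (hBm.inter (meas_eq (hXm _) 0)) t
  have e3 := partition (μ := μ) hbin hXm (B ∩ {ω | X (t - 1) i j ω = 1})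
    (hBm.inter (meas_eq (hXm _) 1)) t
  rw [e1, e2, e3, Finset.mul_sum, Finset.mul_sum, ← Finset.sum_add_distrib]
  refine Finset.sum_congr rfl fun v _ => ?_
  rcases hB v with hsub | hemp
  · have hBpe : B ∩ pe X i j t v = pe X i j t v := Set.inter_eq_self_of_subset_right hsub
    have hA : {ω | X t i j ω = 1} ∩ B ∩ pe X i j t v = {ω | X t i j ω = 1} ∩ pe X i j t v := by
      rw [Set.inter_assoc, hBpe]
    have hlastv : ∀ ω ∈ pe X i j t v, X (t - 1) i j ω = bval (v ⟨t - 1, htlt⟩) :=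
      fun ω hω => hω (t - 1) htlt
    cases hb : v ⟨t - 1, htlt⟩ with
    | false =>
        have h0 : B ∩ {ω | X (t - 1) i j ω = 0} ∩ pe X i j t v = pe X i j t v := by
          ext ω
          simp only [Set.mem_inter_iff, Set.mem_setOf_eq]
          constructor
          · rintro ⟨_, h⟩; exact h
          · intro h; exact ⟨⟨hsub h, by rw [hlastv ω h, hb]; simp [bval]⟩, h⟩
        have h1 : B ∩ {ω | X (t - 1) i j ω = 1} ∩ pe X i j t v = ∅ := by
          ext ω
          simp only [Set.mem_inter_iff, Set.mem_setOf_eq, Set.mem_empty_iff_false, iff_false,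
            not_and]
          rintro ⟨_, h1⟩ h
          rw [hlastv ω h, hb] at h1
          simp [bval] at h1
        rw [hA, step_path hm hij ht1 htn htlt v, h0, h1, hb]
        simp
    | true =>
        have h0 : B ∩ {ω | X (t - 1) i j ω = 0} ∩ pe X i j t v = ∅ := by
          ext ω
          simp only [Set.mem_inter_iff, Set.mem_setOf_eq, Set.mem_empty_iff_false, iff_false,
            not_and]
          rintro ⟨_, h1⟩ h
          rw [hlastv ω h, hb] at h1
          simp [bval] at h1
        have h1 : B ∩ {ω | X (t - 1) i j ω = 1} ∩ pe X i j t v = pe X i j t v := by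
          ext ω
          simp only [Set.mem_inter_iff, Set.mem_setOf_eq]
          constructor
          · rintro ⟨_, h⟩; exact h
          · intro h; exact ⟨⟨hsub h, by rw [hlastv ω h, hb]; simp [bval]⟩, h⟩
        rw [hA, step_path hm hij ht1 htn htlt v, h0, h1, hb]
        simp
  · have hz : μ (B ∩ pe X i j t v) = 0 := by rw [hemp]; simp
    have k1 : μ ({ω | X t i j ω = 1} ∩ B ∩ pe X i j t v) = 0 :=
      measure_mono_null (by rw [Set.inter_assoc]; exact Set.inter_subset_right) hz
    have k2 : μ (B ∩ {ω | X (t - 1) i j ω = 0} ∩ pe X i j t v) = 0 :=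
      measure_mono_null (Set.inter_subset_inter_left _ Set.inter_subset_left) hz
    have k3 : μ (B ∩ {ω | X (t - 1) i j ω = 1} ∩ pe X i j t v) = 0 :=
      measure_mono_null (Set.inter_subset_inter_left _ Set.inter_subset_left) hz
    simp [k1, k2, k3]

lemma prob_zero_eq (hm : TWHM n p Ω μ βs X) {i j : Fin p} (hij : i < j) (u : ℕ) :
    (μ {ω | X u i j ω = 0}).toReal = 1 - (μ {ω | X u i j ω = 1}).toReal := by
  haveI := hm.isProb
  have hc : {ω | X u i j ω = 0} = {ω | X u i j ω = 1}ᶜ := by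
    ext ω
    simp only [Set.mem_setOf_eq, Set.mem_compl_iff]
    rcases hm.binary u i j hij ω with h | h <;> simp [h]
  rw [hc, measure_compl (meas_eq (hm.meas u i j) 1) (measure_ne_top μ _), measure_univ,
    ENNReal.toReal_sub_of_le prob_le_one ENNReal.one_ne_top, ENNReal.toReal_one]

lemma m_const (hm : TWHM n p Ω μ βs X) {i j : Fin p} (hij : i < j) :
    ∀ t, t ≤ n → (μ {ω | X t i j ω = 1}).toReal = pio βs i j := by
  intro t
  induction t with
  | zero => intro _; exact hm.init i j hij
  | succ t ih =>
      intro htn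
      have e := step_general hm hij (by omega) htn Set.univ MeasurableSet.univ
        (fun v => Or.inl (Set.subset_univ _))
      simp only [Set.inter_univ, Set.univ_inter, Nat.add_sub_cancel] at e
      rw [e, prob_zero_eq hm hij t, ih (by omega)]
      unfold pA pB pio
      have h0 : (0:ℝ) < exp (βs i 0 + βs j 0) := exp_pos _
      have h1 : (0:ℝ) < exp (βs i 1 + βs j 1) := exp_pos _
      have d1 : (1:ℝ) + exp (βs i 0 + βs j 0) ≠ 0 := by positivity
      have d2 : (1:ℝ) + exp (βs i 0 + βs j 0) + exp (βs i 1 + βs j 1) ≠ 0 := by positivity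
      field_simp
      ring
lemma inter_zero_toReal (hm : TWHM n p Ω μ βs X) {i j : Fin p} (hij : i < j)
    (A : Set Ω) (hA : MeasurableSet A) (u : ℕ) :
    (μ (A ∩ {ω | X u i j ω = 0})).toReal =
      (μ A).toReal - (μ (A ∩ {ω | X u i j ω = 1})).toReal := by
  haveI := hm.isProb
  have hc : A ∩ {ω | X u i j ω = 0} = A \ {ω | X u i j ω = 1} := by
    ext ω
    simp only [Set.mem_inter_iff, Set.mem_setOf_eq, Set.mem_diff]
    constructor
    · rintro ⟨hA', h0⟩
      refine ⟨hA', ?_⟩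
      rw [h0]; norm_num
    · rintro ⟨hA', h1⟩
      rcases hm.binary u i j hij ω with h | h
      · exact ⟨hA', h⟩
      · exact absurd h h1
  have key := measure_inter_add_diff (μ := μ) A (meas_eq (hm.meas u i j) 1)
  have key2 := congrArg ENNReal.toReal key
  rw [ENNReal.toReal_add (measure_ne_top μ _) (measure_ne_top μ _)] at key2
  rw [hc]
  linarith [key2]

lemma alg_step (βs : Fin p → Fin 2 → ℝ) (i j : Fin p) (c : ℝ) :
    pA βs i j * (pio βs i j -
        (pio βs i j * pio βs i j + c * (pio βs i j - pio βs i j * pio βs i j))) +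
      pB βs i j * (pio βs i j * pio βs i j + c * (pio βs i j - pio βs i j * pio βs i j)) =
    pio βs i j * pio βs i j + lam βs i j * c * (pio βs i j - pio βs i j * pio βs i j) := by
  unfold pA pB pio lam
  have h0 : (0:ℝ) < exp (βs i 0 + βs j 0) := exp_pos _
  have h1 : (0:ℝ) < exp (βs i 1 + βs j 1) := exp_pos _
  have d1 : (1:ℝ) + exp (βs i 0 + βs j 0) ≠ 0 := by positivity
  have d2 : (1:ℝ) + exp (βs i 0 + βs j 0) + exp (βs i 1 + βs j 1) ≠ 0 := by positivity
  field_simp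
  ring

lemma joint_formula (hm : TWHM n p Ω μ βs X) {i j : Fin p} (hij : i < j)
    {s : ℕ} (hs : s ≤ n) :
    ∀ d, s + d ≤ n →
      (μ ({ω | X (s + d) i j ω = 1} ∩ {ω | X s i j ω = 1})).toReal =
        pio βs i j * pio βs i j +
          lam βs i j ^ d * (pio βs i j - pio βs i j * pio βs i j) := by
  intro d
  induction d with
  | zero =>
      intro _
      rw [Nat.add_zero, Set.inter_self, m_const hm hij s hs]
      ring
  | succ d ih =>
      intro hd
      have hsd : s + d ≤ n := by omega
      have hslt : s < s + (d + 1) := by omega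
      have hB : ∀ v : Fin (s + (d + 1)) → Bool,
          pe X i j (s + (d + 1)) v ⊆ {ω | X s i j ω = 1} ∨
          {ω | X s i j ω = 1} ∩ pe X i j (s + (d + 1)) v = ∅ := by
        intro v
        cases hv : v ⟨s, hslt⟩ with
        | true =>
            left
            intro ω hω
            have h := hω s hslt
            rw [hv] at h
            simpa [bval] using h
        | false =>
            right
            ext ω
            simp only [Set.mem_inter_iff, Set.mem_setOf_eq, Set.mem_empty_iff_false, iff_false,
              not_and]
            intro h1 hω
            have h := hω s hslt
            rw [h1, hv] at h
            simp [bval] at h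
      have e := step_general hm hij (show 1 ≤ s + (d + 1) by omega) hd
        {ω | X s i j ω = 1} (meas_eq (hm.meas s i j) 1) hB
      have hsub1 : s + (d + 1) - 1 = s + d := by omega
      rw [hsub1] at e
      rw [inter_zero_toReal hm hij _ (meas_eq (hm.meas s i j) 1) (s + d),
        m_const hm hij s hs, Set.inter_comm {ω | X s i j ω = 1}, ih hsd] at e
      rw [e, pow_succ, mul_comm (lam βs i j ^ d) (lam βs i j)]
      exact alg_step βs i j (lam βs i j ^ d)
lemma X_eq_indicator (hm : TWHM n p Ω μ βs X) {i j : Fin p} (hij : i < j) (t : ℕ) :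
    X t i j = Set.indicator {ω | X t i j ω = 1} (fun _ => (1:ℝ)) := by
  funext ω
  rcases hm.binary t i j hij ω with h | h
  · have hmem : ω ∉ {ω | X t i j ω = 1} := by simp [Set.mem_setOf_eq, h]
    rw [Set.indicator_of_notMem hmem, h]
  · have hmem : ω ∈ {ω | X t i j ω = 1} := h
    rw [Set.indicator_of_mem hmem, h]

lemma integrable_X (hm : TWHM n p Ω μ βs X) {i j : Fin p} (hij : i < j) (t : ℕ) :
    Integrable (X t i j) μ := by
  haveI := hm.isProb
  rw [X_eq_indicator hm hij t]
  exact (integrable_const (1:ℝ)).indicator (meas_eq (hm.meas t i j) 1)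

lemma integral_X (hm : TWHM n p Ω μ βs X) {i j : Fin p} (hij : i < j) (t : ℕ) :
    ∫ ω, X t i j ω ∂μ = (μ {ω | X t i j ω = 1}).toReal := by
  conv_lhs => rw [X_eq_indicator hm hij t]
  rw [integral_indicator_const (1:ℝ) (meas_eq (hm.meas t i j) 1)]
  simp [Measure.real]

lemma mul_eq_indicator (hm : TWHM n p Ω μ βs X) {i j k l : Fin p} (hij : i < j) (hkl : k < l)
    (t s : ℕ) :
    (fun ω => X t i j ω * X s k l ω) =
      Set.indicator ({ω | X t i j ω = 1} ∩ {ω | X s k l ω = 1}) (fun _ => (1:ℝ)) := by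
  funext ω
  rcases hm.binary t i j hij ω with h1 | h1 <;> rcases hm.binary s k l hkl ω with h2 | h2 <;>
    simp [Set.indicator_apply, Set.mem_inter_iff, Set.mem_setOf_eq, h1, h2]

lemma integrable_mulX (hm : TWHM n p Ω μ βs X) {i j k l : Fin p} (hij : i < j) (hkl : k < l)
    (t s : ℕ) : Integrable (fun ω => X t i j ω * X s k l ω) μ := by
  haveI := hm.isProb
  rw [mul_eq_indicator hm hij hkl t s]
  exact (integrable_const (1:ℝ)).indicator
    ((meas_eq (hm.meas t i j) 1).inter (meas_eq (hm.meas s k l) 1))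

lemma integral_mulX (hm : TWHM n p Ω μ βs X) {i j : Fin p} (hij : i < j) (t s : ℕ) :
    ∫ ω, X t i j ω * X s i j ω ∂μ =
      (μ ({ω | X t i j ω = 1} ∩ {ω | X s i j ω = 1})).toReal := by
  rw [mul_eq_indicator hm hij hij t s,
    integral_indicator_const (1:ℝ) ((meas_eq (hm.meas t i j) 1).inter (meas_eq (hm.meas s i j) 1))]
  simp [Measure.real]

lemma indep_cross (hm : TWHM n p Ω μ βs X) {i j k l : Fin p} (hij : i < j) (hkl : k < l)
    (hne : (i, j) ≠ (k, l)) {t s : ℕ} (ht : t ≤ n) (hs : s ≤ n) :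
    ∫ ω, X t i j ω * X s k l ω ∂μ = (∫ ω, X t i j ω ∂μ) * ∫ ω, X s k l ω ∂μ := by
  have hq : (⟨(i, j), hij⟩ : {q : Fin p × Fin p // q.1 < q.2}) ≠ ⟨(k, l), hkl⟩ := by
    simpa using hne
  have h1 := hm.indep.indepFun hq
  have h2 := h1.comp (measurable_pi_apply (⟨t, by omega⟩ : Fin (n + 1)))
    (measurable_pi_apply (⟨s, by omega⟩ : Fin (n + 1)))
  have h3 : IndepFun (X t i j) (X s k l) μ := h2
  exact ProbabilityTheory.IndepFun.integral_mul_eq_mul_integral h3 (hm.meas t i j).aestronglyMeasurable (hm.meas s k l).aestronglyMeasurable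
lemma xsym_spec {i k : Fin p} (hik : i ≠ k) (X : ℕ → Fin p → Fin p → Ω → ℝ) :
    ∃ (a b : Fin p), a < b ∧ (∀ u, twhmXsym X u i k = X u a b) ∧
      (βs i 0 + βs k 0 = βs a 0 + βs b 0) ∧ (βs i 1 + βs k 1 = βs a 1 + βs b 1) ∧
      ((a = i ∧ b = k) ∨ (a = k ∧ b = i)) := by
  rcases lt_or_gt_of_ne hik with h | h
  · exact ⟨i, k, h, fun u => by funext ω; simp [twhmXsym, h], rfl, rfl, Or.inl ⟨rfl, rfl⟩⟩
  · refine ⟨k, i, h, fun u => ?_, by ring, by ring, Or.inr ⟨rfl, rfl⟩⟩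
    funext ω
    simp [twhmXsym, lt_asymm h]

lemma cov_pair_final (hm : TWHM n p Ω μ βs X) {a b : Fin p} (hab : a < b) {t s : ℕ}
    (ht : t ≤ n) (hst : s ≤ t) :
    (∫ ω, X t a b ω * X s a b ω ∂μ) - (∫ ω, X t a b ω ∂μ) * (∫ ω, X s a b ω ∂μ) =
      lam βs a b ^ (t - s) * (pio βs a b - pio βs a b * pio βs a b) := by
  have hsn : s ≤ n := le_trans hst ht
  have h1 : t = s + (t - s) := by omega
  rw [integral_mulX hm hab, integral_X hm hab, integral_X hm hab, m_const hm hab t ht,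
    m_const hm hab s hsn]
  have hj := joint_formula hm hab hsn (t - s) (by omega)
  rw [← h1] at hj
  rw [hj]
  ring

lemma mean_deg (hm : TWHM n p Ω μ βs X) (i : Fin p) {t : ℕ} (ht : t ≤ n) :
    ∫ ω, twhmDeg X i t ω ∂μ = ∑ k ∈ Finset.univ.erase i, pio βs i k := by
  unfold twhmDeg
  rw [integral_finset_sum]
  · refine Finset.sum_congr rfl fun k hk => ?_
    obtain ⟨a, b, hab, hXf, h0, h1, -⟩ :=
      xsym_spec (βs := βs) (Finset.ne_of_mem_erase hk).symm X
    rw [hXf t, integral_X hm hab, m_const hm hab t ht]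
    unfold pio
    rw [h0]
  · intro k hk
    obtain ⟨a, b, hab, hXf, -, -, -⟩ :=
      xsym_spec (βs := βs) (Finset.ne_of_mem_erase hk).symm X
    rw [hXf t]
    exact integrable_X hm hab t

lemma cov_deg_le (hm : TWHM n p Ω μ βs X) (i : Fin p) {t s : ℕ}
    (ht : t ≤ n) (hst : s ≤ t) :
    covQ μ (twhmDeg X i t) (twhmDeg X i s) =
      ∑ k ∈ Finset.univ.erase i,
        lam βs i k ^ (t - s) * (pio βs i k - pio βs i k * pio βs i k) := by
  classical
  have hsn : s ≤ n := le_trans hst ht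
  have hint : ∀ (u : ℕ), u ≤ n → ∀ (k : Fin p), k ∈ Finset.univ.erase i →
      Integrable (fun ω => twhmXsym X u i k ω) μ := by
    intro u _ k hk
    obtain ⟨a, b, hab, hXf, -, -, -⟩ :=
      xsym_spec (βs := βs) (Finset.ne_of_mem_erase hk).symm X
    rw [hXf u]
    exact integrable_X hm hab u
  have hintm : ∀ (k l : Fin p), k ∈ Finset.univ.erase i → l ∈ Finset.univ.erase i →
      Integrable (fun ω => twhmXsym X t i k ω * twhmXsym X s i l ω) μ := by
    intro k l hk hl
    obtain ⟨a, b, hab, hXf, -, -, -⟩ :=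
      xsym_spec (βs := βs) (Finset.ne_of_mem_erase hk).symm X
    obtain ⟨c, d, hcd, hYf, -, -, -⟩ :=
      xsym_spec (βs := βs) (Finset.ne_of_mem_erase hl).symm X
    rw [show (fun ω => twhmXsym X t i k ω * twhmXsym X s i l ω) =
        (fun ω => X t a b ω * X s c d ω) by rw [hXf t, hYf s]]
    exact integrable_mulX hm hab hcd t s
  have I1 : ∫ ω, twhmDeg X i t ω * twhmDeg X i s ω ∂μ =
      ∑ k ∈ Finset.univ.erase i, ∑ l ∈ Finset.univ.erase i,
        ∫ ω, twhmXsym X t i k ω * twhmXsym X s i l ω ∂μ := by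
    unfold twhmDeg
    simp_rw [Finset.sum_mul_sum]
    rw [integral_finset_sum _ (fun k hk => integrable_finset_sum _ (fun l hl => hintm k l hk hl))]
    exact Finset.sum_congr rfl fun k hk =>
      integral_finset_sum _ (fun l hl => hintm k l hk hl)
  have I2 : ∫ ω, twhmDeg X i t ω ∂μ =
      ∑ k ∈ Finset.univ.erase i, ∫ ω, twhmXsym X t i k ω ∂μ := by
    unfold twhmDeg
    exact integral_finset_sum _ (fun k hk => hint t ht k hk)
  have I3 : ∫ ω, twhmDeg X i s ω ∂μ =
      ∑ k ∈ Finset.univ.erase i, ∫ ω, twhmXsym X s i k ω ∂μ := by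
    unfold twhmDeg
    exact integral_finset_sum _ (fun k hk => hint s hsn k hk)
  unfold covQ
  rw [I1, I2, I3, Finset.sum_mul_sum, ← Finset.sum_sub_distrib]
  refine Finset.sum_congr rfl fun k hk => ?_
  rw [← Finset.sum_sub_distrib]
  have hkne : k ≠ i := Finset.ne_of_mem_erase hk
  obtain ⟨a, b, hab, hXf, h0, h1, hcase⟩ := xsym_spec (βs := βs) hkne.symm X
  rw [Finset.sum_eq_single_of_mem k hk]
  · rw [hXf t, hXf s, cov_pair_final hm hab ht hst]
    unfold lam pio
    rw [← h0, ← h1]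
  · intro l hl hlk
    have hlne : l ≠ i := Finset.ne_of_mem_erase hl
    obtain ⟨c, d, hcd, hYf, -, -, hcase'⟩ := xsym_spec (βs := βs) hlne.symm X
    rw [hXf t, hYf s, indep_cross hm hab hcd ?hne ht hsn, sub_self]
    case hne =>
      rcases hcase with ⟨rfl, rfl⟩ | ⟨rfl, rfl⟩ <;> rcases hcase' with ⟨rfl, rfl⟩ | ⟨rfl, rfl⟩
      · exact fun h => hlk (congrArg Prod.snd h).symm
      · exact fun h => hlne (congrArg Prod.fst h).symm
      · exact fun h => hkne (congrArg Prod.fst h)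
      · exact fun h => hlk (congrArg Prod.fst h).symm
lemma covQ_comm (f g : Ω → ℝ) : covQ μ f g = covQ μ g f := by
  unfold covQ
  have h : (∫ ω, f ω * g ω ∂μ) = ∫ ω, g ω * f ω ∂μ := by
    congr 1
    funext ω
    ring
  rw [h]
  ring

lemma pio_sub (βs : Fin p → Fin 2 → ℝ) (i k : Fin p) :
    pio βs i k - pio βs i k * pio βs i k =
      exp (βs i 0 + βs k 0) / (1 + exp (βs i 0 + βs k 0)) ^ 2 := by
  unfold pio
  have d1 : (1:ℝ) + exp (βs i 0 + βs k 0) ≠ 0 := by positivity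
  field_simp
  ring

lemma cov_deg (hm : TWHM n p Ω μ βs X) (i : Fin p) {t s : ℕ} (ht : t ≤ n) (hs : s ≤ n) :
    covQ μ (twhmDeg X i t) (twhmDeg X i s) =
      ∑ k ∈ Finset.univ.erase i,
        (exp (βs i 1 + βs k 1) / (1 + exp (βs i 0 + βs k 0) + exp (βs i 1 + βs k 1))) ^
            (((t : ℤ) - (s : ℤ)).natAbs) *
          (exp (βs i 0 + βs k 0) / (1 + exp (βs i 0 + βs k 0)) ^ 2) := by
  rcases le_total s t with h | h
  · rw [cov_deg_le hm i ht h]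
    refine Finset.sum_congr rfl fun k hk => ?_
    rw [pio_sub]
    have he : ((t : ℤ) - (s : ℤ)).natAbs = t - s := by omega
    rw [he]
    unfold lam
    rfl
  · rw [covQ_comm, cov_deg_le hm i hs h]
    refine Finset.sum_congr rfl fun k hk => ?_
    rw [pio_sub]
    have he : ((t : ℤ) - (s : ℤ)).natAbs = s - t := by omega
    rw [he]
    unfold lam
    rfl

lemma var_deg (hm : TWHM n p Ω μ βs X) (i : Fin p) {t : ℕ} (ht : t ≤ n) :
    covQ μ (twhmDeg X i t) (twhmDeg X i t) =
      ∑ k ∈ Finset.univ.erase i,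
        exp (βs i 0 + βs k 0) / (1 + exp (βs i 0 + βs k 0)) ^ 2 := by
  rw [cov_deg hm i ht ht]
  refine Finset.sum_congr rfl fun k _ => ?_
  simp

lemma var_pos (hp : 2 ≤ p) (βs : Fin p → Fin 2 → ℝ) (i : Fin p) :
    0 < ∑ k ∈ Finset.univ.erase i,
        exp (βs i 0 + βs k 0) / (1 + exp (βs i 0 + βs k 0)) ^ 2 := by
  apply Finset.sum_pos
  · intro k _
    positivity
  · rw [← Finset.card_pos, Finset.card_erase_of_mem (Finset.mem_univ i), Finset.card_univ,
      Fintype.card_fin]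
    omega

end TWHMAux

/-- Proposition 1: mean, variance and autocorrelation of the degree sequences under
the TWHM. -/
theorem twhm_degree_moments (n p : ℕ) (hn : 1 ≤ n) (hp : 2 ≤ p)
    (Ω : Type) [MeasurableSpace Ω] (μ : Measure Ω)
    (βs : Fin p → Fin 2 → ℝ) (X : ℕ → Fin p → Fin p → Ω → ℝ)
    (hmodel : TWHM n p Ω μ βs X)
    (i : Fin p) (t s : ℕ) (ht : t ≤ n) (hs : s ≤ n) :
    (∫ ω, twhmDeg X i t ω ∂μ) =
      (∑ k ∈ Finset.univ.erase i,
        exp (βs i 0 + βs k 0) / (1 + exp (βs i 0 + βs k 0))) ∧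
    covQ μ (twhmDeg X i t) (twhmDeg X i t) =
      (∑ k ∈ Finset.univ.erase i,
        exp (βs i 0 + βs k 0) / (1 + exp (βs i 0 + βs k 0)) ^ 2) ∧
    covQ μ (twhmDeg X i t) (twhmDeg X i s) /
        Real.sqrt (covQ μ (twhmDeg X i t) (twhmDeg X i t) *
          covQ μ (twhmDeg X i s) (twhmDeg X i s)) =
      (∑ k ∈ Finset.univ.erase i,
          exp (βs i 0 + βs k 0) / (1 + exp (βs i 0 + βs k 0)) ^ 2)⁻¹ *
        ∑ k ∈ Finset.univ.erase i,
          (exp (βs i 1 + βs k 1) /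
              (1 + exp (βs i 0 + βs k 0) + exp (βs i 1 + βs k 1))) ^
              (((t : ℤ) - (s : ℤ)).natAbs) *
            (exp (βs i 0 + βs k 0) / (1 + exp (βs i 0 + βs k 0)) ^ 2) := by
  refine ⟨?_, ?_, ?_⟩
  · rw [TWHMAux.mean_deg hmodel i ht]
    exact Finset.sum_congr rfl fun k _ => rfl
  · exact TWHMAux.var_deg hmodel i ht
  · rw [TWHMAux.var_deg hmodel i ht, TWHMAux.var_deg hmodel i hs,
      Real.sqrt_mul_self (le_of_lt (TWHMAux.var_pos hp βs i)),
      TWHMAux.cov_deg hmodel i ht hs, div_eq_inv_mul]
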